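/- Let (V,P) be a mixing Markov chain. There exists K > 0 such that for all large n, the maximal expected meeting time on the n-block chain satisfies m_n* ≤ K·n/Δ_n. -/

import Mathlib

open Finset Filter
open scoped ENNReal

noncomputable section

variable {V : Type*}

/-- `P` is a stochastic transition matrix. -/
def IsStochastic [Fintype V] (P : Matrix V V ℝ) : Prop :=
  (∀ u v, 0 ≤ P u v) ∧ ∀ u, ∑ v, P u v = 1

/-- The chain `(V,P)` is mixing: some power of `P` has all entries positive. -/
def IsMixing [Fintype V] [DecidableEq V] (P : Matrix V V ℝ) : Prop :=
  ∃ n : ℕ, 0 < n ∧ ∀ u v, 0 < (P ^ n) u v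

/-- `pi` is a stationary distribution for `P`. -/
def IsStationaryDist [Fintype V] (P : Matrix V V ℝ) (pi : V → ℝ) : Prop :=
  (∀ v, 0 ≤ pi v) ∧ (∑ v, pi v = 1) ∧ ∀ v, ∑ u, pi u * P u v = pi v

/-- One step of the chain killed on the set `B`. -/
def killedStep [Fintype V] [DecidableEq V] (P : Matrix V V ℝ) (B : Finset V) (ν : V → ℝ) : V → ℝ :=
  fun v => ∑ u, if u ∈ B then 0 else ν u * P u v

/-- `avoidProb P B ν t = P_ν(T_B > t)`, the probability that the chain with initial
distribution `ν` avoids `B` at all times `0,…,t`; here `T_B = inf {t ≥ 0 : X_t ∈ B}`. -/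
def avoidProb [Fintype V] [DecidableEq V] (P : Matrix V V ℝ) (B : Finset V) (ν : V → ℝ) (t : ℕ) : ℝ :=
  ∑ u, if u ∈ B then 0 else ((killedStep P B)^[t] ν) u

/-- Point mass at `v`. -/
def pointMass [DecidableEq V] (v : V) : V → ℝ := fun u => if u = v then 1 else 0

/-- `E_v(T_B)`, as an extended real (infinite if `B` is not reachable). -/
def hitExp [Fintype V] [DecidableEq V] (P : Matrix V V ℝ) (B : Finset V) (v : V) : ℝ≥0∞ :=
  ∑' t : ℕ, ENNReal.ofReal (avoidProb P B (pointMass v) t)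

/-- `m_B = max_v E_v(T_B)`. -/
def maxHitExp [Fintype V] [DecidableEq V] (P : Matrix V V ℝ) (B : Finset V) : ℝ≥0∞ :=
  ⨆ v : V, hitExp P B v

/-- Transition matrix of two independent walkers. -/
def prodMatrix (P : Matrix V V ℝ) : Matrix (V × V) (V × V) ℝ :=
  fun p q => P p.1 q.1 * P p.2 q.2

/-- The diagonal of `V × V`. -/
def diagSet (V : Type*) [Fintype V] [DecidableEq V] : Finset (V × V) :=
  univ.filter fun p => p.1 = p.2

/-- `P(m(u,v) > t)`: the probability that two independent walkers started at `u` and `v`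
have not met by time `t`. -/
def meetSurvival [Fintype V] [DecidableEq V] (P : Matrix V V ℝ) (u v : V) (t : ℕ) : ℝ :=
  avoidProb (prodMatrix P) (diagSet V) (pointMass (u, v)) t

/-- `E(m(u,v))`, the expected meeting time of walkers started at `u`, `v`. -/
def meetExp [Fintype V] [DecidableEq V] (P : Matrix V V ℝ) (u v : V) : ℝ :=
  ∑' t : ℕ, meetSurvival P u v t

/-- `m* = max_{u,v} E(m(u,v))`. -/
def maxMeetExp [Fintype V] [DecidableEq V] (P : Matrix V V ℝ) : ℝ :=
  ⨆ p : V × V, meetExp P p.1 p.2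

/-- `m̄ = Σ_{u,v} pi(u) pi(v) E(m(u,v))`. -/
def meanMeetExp [Fintype V] [DecidableEq V] (P : Matrix V V ℝ) (pi : V → ℝ) : ℝ :=
  ∑ u, ∑ v, pi u * pi v * meetExp P u v

/-- Transition matrix of the coalescing random walk: the state `f : V → V` records the
current position of the walker started at each site; walkers at the same site move together. -/
def coalMatrix [Fintype V] [DecidableEq V] (P : Matrix V V ℝ) : Matrix (V → V) (V → V) ℝ :=
  fun f g =>
    if ∀ u v, f u = f v → g u = g v then
      ∏ s ∈ univ.image f, (if h : ∃ u, f u = s then P s (g h.choose) else 0)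
    else 0

/-- Constant maps: the coalescing walk has fully coalesced exactly when its state is constant. -/
def constSet (V : Type*) [Fintype V] [DecidableEq V] : Finset (V → V) :=
  univ.filter fun f => ∀ u v : V, f u = f v

/-- `P(C > t)`: the probability that the coalescing random walk started with one walker on
each state has not fully coalesced by time `t`. -/
def coalSurvival [Fintype V] [DecidableEq V] (P : Matrix V V ℝ) (t : ℕ) : ℝ :=
  avoidProb (coalMatrix P) (constSet V) (pointMass id) t

/-- `E(C)`, the expected full coalescence time. -/
def coalExp [Fintype V] [DecidableEq V] (P : Matrix V V ℝ) : ℝ :=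
  ∑' t : ℕ, coalSurvival P t

/-- `E(C²)`, via the tail-sum formula `E(C²) = Σ_{t≥0} P(C > √t)`. -/
def coalMoment2 [Fintype V] [DecidableEq V] (P : Matrix V V ℝ) : ℝ :=
  ∑' t : ℕ, coalSurvival P (Nat.sqrt t)

/-- `μ(w) = pi(w_1) ∏ P(w_j, w_{j+1})`, the stationary measure of the word `w`. -/
def wordProb [Fintype V] (pi : V → ℝ) (P : Matrix V V ℝ) {n : ℕ} (w : Fin (n + 1) → V) : ℝ :=
  pi (w 0) * ∏ i : Fin n, P (w i.castSucc) (w i.succ)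

/-- The state space `V_n` of the `n`-block chain: words of length `n+1` of positive measure. -/
abbrev BlockStates [Fintype V] (pi : V → ℝ) (P : Matrix V V ℝ) (n : ℕ) : Type _ :=
  {w : Fin (n + 1) → V // 0 < wordProb pi P w}

/-- The transition matrix `P_n` of the `n`-block chain. -/
def blockMatrix [Fintype V] [DecidableEq V] (pi : V → ℝ) (P : Matrix V V ℝ) (n : ℕ) :
    Matrix (BlockStates pi P n) (BlockStates pi P n) ℝ :=
  fun u v =>
    if ∀ i : Fin n, u.1 i.succ = v.1 i.castSucc then P (u.1 (Fin.last n)) (v.1 (Fin.last n))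
    else 0

/-- The stationary distribution `π_n` of the `n`-block chain. -/
def blockPi [Fintype V] (pi : V → ℝ) (P : Matrix V V ℝ) (n : ℕ) :
    BlockStates pi P n → ℝ :=
  fun w => wordProb pi P w.1

/-- `Δ_n = Σ_{u ∈ V_n} μ(u)²`. -/
def blockDelta [Fintype V] (pi : V → ℝ) (P : Matrix V V ℝ) (n : ℕ) : ℝ :=
  ∑ w : Fin (n + 1) → V, (wordProb pi P w) ^ 2

/-- The entropy `h(V,P) = -Σ_{u,v} pi(u) P(u,v) log P(u,v)`. -/
def chainEntropy [Fintype V] (P : Matrix V V ℝ) (pi : V → ℝ) : ℝ :=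
  -∑ u, ∑ v, pi u * P u v * Real.log (P u v)


/-! ### Auxiliary lemmas: general killed-chain theory -/

section KilledChain

set_option linter.unusedSectionVars false

variable {S : Type*} [Fintype S] [DecidableEq S]

lemma isStochastic_pow {Q : Matrix S S ℝ} (hQ : IsStochastic Q) (t : ℕ) :
    IsStochastic (Q ^ t) := by
  induction t with
  | zero =>
    constructor
    · intro u v; simp [Matrix.one_apply]; positivity
    · intro u; simp [Matrix.one_apply]
  | succ t ih =>
    constructor
    · intro u v
      rw [pow_succ, Matrix.mul_apply]
      exact Finset.sum_nonneg fun w _ => mul_nonneg (ih.1 u w) (hQ.1 w v)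
    · intro u
      rw [pow_succ]
      simp only [Matrix.mul_apply]
      rw [Finset.sum_comm]
      have : ∀ w : S, ∑ v, (Q ^ t) u w * Q w v = (Q ^ t) u w := by
        intro w; rw [← Finset.mul_sum, hQ.2 w, mul_one]
      rw [Finset.sum_congr rfl fun w _ => this w, ih.2 u]

lemma isStochastic_prod {Q : Matrix S S ℝ} (hQ : IsStochastic Q) :
    IsStochastic (prodMatrix Q) := by
  constructor
  · intro p q; exact mul_nonneg (hQ.1 _ _) (hQ.1 _ _)
  · intro p
    rw [Fintype.sum_prod_type]
    simp only [prodMatrix]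
    rw [← Finset.sum_mul_sum]
    rw [hQ.2, hQ.2, mul_one]

lemma prodMatrix_pow (Q : Matrix S S ℝ) (t : ℕ) (p q : S × S) :
    ((prodMatrix Q) ^ t) p q = (Q ^ t) p.1 q.1 * (Q ^ t) p.2 q.2 := by
  induction t generalizing q with
  | zero =>
    simp only [pow_zero, Matrix.one_apply]
    rcases p with ⟨p1, p2⟩; rcases q with ⟨q1, q2⟩
    by_cases h1 : p1 = q1 <;> by_cases h2 : p2 = q2 <;>
      simp [Prod.ext_iff, h1, h2]
  | succ t ih =>
    rw [pow_succ, pow_succ]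
    simp only [Matrix.mul_apply]
    rw [Fintype.sum_prod_type]
    rw [Finset.sum_mul_sum]
    congr 1; ext w1; congr 1; ext w2
    rw [ih (w1, w2)]
    simp [prodMatrix]; ring

variable (Q : Matrix S S ℝ) (B : Finset S)

lemma killedStep_apply (ν : S → ℝ) (v : S) :
    killedStep Q B ν v = ∑ u, if u ∈ B then 0 else ν u * Q u v := rfl

lemma avoidProb_def (ν : S → ℝ) (t : ℕ) :
    avoidProb Q B ν t = ∑ u, if u ∈ B then 0 else ((killedStep Q B)^[t] ν) u := rfl

lemma killed_iter_nonneg (hQ0 : ∀ u v, 0 ≤ Q u v) {ν : S → ℝ} (hν : ∀ v, 0 ≤ ν v) (t : ℕ) :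
    ∀ v, 0 ≤ (killedStep Q B)^[t] ν v := by
  induction t with
  | zero => exact hν
  | succ t ih =>
    intro v
    rw [Function.iterate_succ_apply', killedStep_apply]
    refine Finset.sum_nonneg fun u _ => ?_
    split
    · exact le_refl 0
    · exact mul_nonneg (ih u) (hQ0 u v)

lemma avoid_nonneg (hQ0 : ∀ u v, 0 ≤ Q u v) {ν : S → ℝ} (hν : ∀ v, 0 ≤ ν v) (t : ℕ) :
    0 ≤ avoidProb Q B ν t := by
  refine Finset.sum_nonneg fun u _ => ?_
  split
  · exact le_refl 0
  · exact killed_iter_nonneg Q B hQ0 hν t u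

lemma avoid_succ_le (hQ : IsStochastic Q) {ν : S → ℝ} (hν : ∀ v, 0 ≤ ν v) (t : ℕ) :
    avoidProb Q B ν (t + 1) ≤ avoidProb Q B ν t := by
  rw [avoidProb_def, avoidProb_def]
  set ν' := (killedStep Q B)^[t] ν with hν'
  have hν'0 : ∀ v, 0 ≤ ν' v := killed_iter_nonneg Q B hQ.1 hν t
  rw [Function.iterate_succ_apply']
  calc ∑ u, (if u ∈ B then 0 else killedStep Q B ν' u)
      ≤ ∑ u, killedStep Q B ν' u := by
        refine Finset.sum_le_sum fun u _ => ?_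
        split
        · rw [killedStep_apply]
          refine Finset.sum_nonneg fun w _ => ?_
          split
          · exact le_refl 0
          · exact mul_nonneg (hν'0 w) (hQ.1 w u)
        · exact le_refl _
    _ = ∑ u, (if u ∈ B then 0 else ν' u) := by
        simp only [killedStep_apply]
        rw [Finset.sum_comm]
        refine Finset.sum_congr rfl fun u _ => ?_
        split
        · simp
        · rw [← Finset.mul_sum, hQ.2 u, mul_one]

lemma avoid_antitone (hQ : IsStochastic Q) {ν : S → ℝ} (hν : ∀ v, 0 ≤ ν v) {s t : ℕ}
    (hst : s ≤ t) : avoidProb Q B ν t ≤ avoidProb Q B ν s := by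
  induction t with
  | zero => simp_all
  | succ t ih =>
    rcases Nat.lt_or_ge s (t + 1) with h | h
    · exact le_trans (avoid_succ_le Q B hQ hν t) (ih (Nat.lt_succ_iff.mp h))
    · have : s = t + 1 := le_antisymm hst h
      subst this; exact le_refl _

lemma avoid_zero_le_sum (ν : S → ℝ) (hν : ∀ v, 0 ≤ ν v) :
    avoidProb Q B ν 0 ≤ ∑ v, ν v := by
  rw [avoidProb_def]
  refine Finset.sum_le_sum fun u _ => ?_
  simp only [Function.iterate_zero, id_eq]
  split
  · exact hν u
  · exact le_refl _

lemma killed_iter_linear (ν : S → ℝ) (t : ℕ) (v : S) :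
    (killedStep Q B)^[t] ν v = ∑ p, ν p * (killedStep Q B)^[t] (pointMass p) v := by
  induction t generalizing v with
  | zero =>
    simp only [Function.iterate_zero, id_eq, pointMass]
    rw [Finset.sum_congr rfl fun p _ => by rw [mul_ite, mul_one, mul_zero]]
    simp [eq_comm]
  | succ t ih =>
    rw [Function.iterate_succ_apply', killedStep_apply]
    have : ∀ u : S, (if u ∈ B then (0:ℝ) else (killedStep Q B)^[t] ν u * Q u v)
        = ∑ p, ν p * (if u ∈ B then 0 else (killedStep Q B)^[t] (pointMass p) u * Q u v) := by
      intro u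
      split
      · simp
      · rw [ih u, Finset.sum_mul]
        refine Finset.sum_congr rfl fun p _ => by ring
    rw [Finset.sum_congr rfl fun u _ => this u, Finset.sum_comm]
    refine Finset.sum_congr rfl fun p _ => ?_
    rw [← Finset.mul_sum, Function.iterate_succ_apply', killedStep_apply]

lemma avoid_decomp (ν : S → ℝ) (t : ℕ) :
    avoidProb Q B ν t = ∑ p, ν p * avoidProb Q B (pointMass p) t := by
  rw [avoidProb_def]
  have : ∀ u : S, (if u ∈ B then (0:ℝ) else (killedStep Q B)^[t] ν u)
      = ∑ p, ν p * (if u ∈ B then 0 else (killedStep Q B)^[t] (pointMass p) u) := by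
    intro u
    split
    · simp
    · exact killed_iter_linear Q B ν t u
  rw [Finset.sum_congr rfl fun u _ => this u, Finset.sum_comm]
  exact Finset.sum_congr rfl fun p _ => (Finset.mul_sum _ _ _).symm

lemma avoid_shift (ν : S → ℝ) (s t : ℕ) :
    avoidProb Q B ν (s + t)
      = avoidProb Q B (fun v => if v ∈ B then 0 else (killedStep Q B)^[s] ν v) t := by
  set ν' := (killedStep Q B)^[s] ν with hν'
  set ν'' : S → ℝ := fun v => if v ∈ B then 0 else ν' v with hν''
  have hstep : killedStep Q B ν' = killedStep Q B ν'' := by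
    funext v
    rw [killedStep_apply, killedStep_apply]
    refine Finset.sum_congr rfl fun u _ => ?_
    by_cases hu : u ∈ B <;> simp [hν'', hu]
  cases t with
  | zero =>
    rw [avoidProb_def, avoidProb_def]
    simp only [Nat.add_zero, Function.iterate_zero, id_eq]
    refine Finset.sum_congr rfl fun u _ => ?_
    by_cases hu : u ∈ B <;> simp [hν'', hu, hν']
  | succ t =>
    rw [avoidProb_def, avoidProb_def]
    have : (killedStep Q B)^[s + (t+1)] ν = (killedStep Q B)^[t+1] ν'' := by
      rw [add_comm s (t+1), Function.iterate_add_apply]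
      rw [Function.iterate_succ_apply, Function.iterate_succ_apply, ← hν', hstep]
    rw [this]

lemma killed_le_free (hQ0 : ∀ u v, 0 ≤ Q u v) {ν : S → ℝ} (hν : ∀ v, 0 ≤ ν v) (t : ℕ) (v : S) :
    (killedStep Q B)^[t] ν v ≤ ∑ u, ν u * (Q ^ t) u v := by
  induction t generalizing v with
  | zero =>
    simp only [Function.iterate_zero, id_eq, pow_zero, Matrix.one_apply]
    rw [Finset.sum_congr rfl fun u (_ : u ∈ univ) => by rw [mul_ite, mul_one, mul_zero]]
    rw [Finset.sum_ite_eq' univ v ν]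
    simp
  | succ t ih =>
    rw [Function.iterate_succ_apply', killedStep_apply]
    calc ∑ u, (if u ∈ B then (0:ℝ) else (killedStep Q B)^[t] ν u * Q u v)
        ≤ ∑ u, (killedStep Q B)^[t] ν u * Q u v := by
          refine Finset.sum_le_sum fun u _ => ?_
          split
          · exact mul_nonneg (killed_iter_nonneg Q B hQ0 hν t u) (hQ0 u v)
          · exact le_refl _
      _ ≤ ∑ u, (∑ w, ν w * (Q ^ t) w u) * Q u v := by
          refine Finset.sum_le_sum fun u _ => ?_
          exact mul_le_mul_of_nonneg_right (ih u) (hQ0 u v)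
      _ = ∑ w, ν w * (Q ^ (t+1)) w v := by
          simp only [Finset.sum_mul]
          rw [Finset.sum_comm]
          refine Finset.sum_congr rfl fun w _ => ?_
          rw [pow_succ, Matrix.mul_apply, Finset.mul_sum]
          refine Finset.sum_congr rfl fun u _ => by ring

lemma pointMass_nonneg (p : S) : ∀ v : S, 0 ≤ pointMass p v := by
  intro v; unfold pointMass; split <;> norm_num

lemma avoid_le_one_sub (hQ : IsStochastic Q) (p : S) (t : ℕ) :
    avoidProb Q B (pointMass p) t ≤ 1 - ∑ b ∈ B, (Q ^ t) p b := by
  have key : ∀ u : S, ∑ w, pointMass p w * (Q ^ t) w u = (Q ^ t) p u := by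
    intro u
    unfold pointMass
    rw [Finset.sum_congr rfl fun w (_ : w ∈ univ) => by rw [ite_mul, one_mul, zero_mul]]
    exact Finset.sum_ite_eq' univ p _ |>.trans (by simp)
  have step1 : avoidProb Q B (pointMass p) t ≤ ∑ u, (if u ∈ B then 0 else (Q ^ t) p u) := by
    rw [avoidProb_def]
    refine Finset.sum_le_sum fun u _ => ?_
    split
    · exact le_refl _
    · exact le_trans (killed_le_free Q B hQ.1 (pointMass_nonneg p) t u) (le_of_eq (key u))
  have h1 := Finset.sum_filter_add_sum_filter_not univ (· ∈ B) fun u => (Q ^ t) p u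
  have h2 : ∑ u ∈ univ.filter (· ∈ B), (Q ^ t) p u = ∑ b ∈ B, (Q ^ t) p b := by
    refine Finset.sum_congr ?_ fun _ _ => rfl
    ext x; simp
  have h3 : ∑ u, (if u ∈ B then (0:ℝ) else (Q ^ t) p u)
      = ∑ u ∈ univ.filter (fun u => ¬ u ∈ B), (Q ^ t) p u := by
    rw [Finset.sum_ite, Finset.sum_const_zero, zero_add]
  have h4 : ∑ u, (Q ^ t) p u = 1 := (isStochastic_pow hQ t).2 p
  rw [h4] at h1
  linarith [step1, h1, h2, h3]

lemma avoid_le_one (hQ : IsStochastic Q) (p : S) (t : ℕ) :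
    avoidProb Q B (pointMass p) t ≤ 1 := by
  have := avoid_le_one_sub Q B hQ p t
  have hB : 0 ≤ ∑ b ∈ B, (Q ^ t) p b :=
    Finset.sum_nonneg fun b _ => (isStochastic_pow hQ t).1 p b
  linarith

lemma avoid_iterate (hQ : IsStochastic Q) {M : ℝ} (hM0 : 0 ≤ M)
    (hM : ∀ p ∉ B, avoidProb Q B (pointMass p) L ≤ M) (p : S) (k : ℕ) :
    avoidProb Q B (pointMass p) (k * L) ≤ M ^ k := by
  induction k with
  | zero =>
    simp only [Nat.zero_mul, pow_zero]
    refine le_trans (avoid_zero_le_sum Q B _ (pointMass_nonneg p)) ?_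
    simp [pointMass]
  | succ k ih =>
    have hkL : (k + 1) * L = k * L + L := by ring
    rw [hkL, avoid_shift]
    set ν' := (killedStep Q B)^[k * L] (pointMass p) with hν'
    set ν'' : S → ℝ := fun v => if v ∈ B then 0 else ν' v with hν''
    have hν''0 : ∀ v, 0 ≤ ν'' v := by
      intro v
      simp only [hν'']
      split
      · exact le_refl 0
      · exact killed_iter_nonneg Q B hQ.1 (pointMass_nonneg p) _ v
    rw [avoid_decomp]
    have hsum : ∑ q, ν'' q = avoidProb Q B (pointMass p) (k * L) := by
      rw [avoidProb_def]
    calc ∑ q, ν'' q * avoidProb Q B (pointMass q) L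
        ≤ ∑ q, ν'' q * M := by
          refine Finset.sum_le_sum fun q _ => ?_
          by_cases hq : q ∈ B
          · simp [hν'', hq]
          · exact mul_le_mul_of_nonneg_left (hM q hq) (hν''0 q)
      _ = (∑ q, ν'' q) * M := by rw [Finset.sum_mul]
      _ ≤ M ^ k * M := by
          rw [hsum]
          exact mul_le_mul_of_nonneg_right ih hM0
      _ = M ^ (k + 1) := by rw [pow_succ]

end KilledChain



/-! ### Auxiliary lemmas: block chain -/

section BlockChain

set_option linter.unusedSectionVars false
set_option maxHeartbeats 1000000

variable [Fintype V] [DecidableEq V] {P : Matrix V V ℝ} {pi : V → ℝ}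
  (hP : IsStochastic P) (hpi : IsStationaryDist P pi)

include hP hpi

lemma pi_mul_le (u v : V) : pi u * P u v ≤ pi v := by
  rw [← hpi.2.2 v]
  exact Finset.single_le_sum (f := fun u => pi u * P u v)
    (fun w _ => mul_nonneg (hpi.1 w) (hP.1 w v)) (Finset.mem_univ u)

lemma wordProb_nonneg {n : ℕ} (w : Fin (n + 1) → V) : 0 ≤ wordProb pi P w :=
  mul_nonneg (hpi.1 _) (Finset.prod_nonneg fun i _ => hP.1 _ _)

lemma word_pos_parts {n : ℕ} {w : Fin (n + 1) → V} (hw : 0 < wordProb pi P w) :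
    0 < pi (w 0) ∧ ∀ i : Fin n, 0 < P (w i.castSucc) (w i.succ) := by
  unfold wordProb at hw
  have hprod : 0 ≤ ∏ i : Fin n, P (w i.castSucc) (w i.succ) :=
    Finset.prod_nonneg fun i _ => hP.1 _ _
  rcases mul_pos_iff.mp hw with ⟨h1, h2⟩ | ⟨h1, h2⟩
  · refine ⟨h1, fun i => ?_⟩
    rcases lt_or_eq_of_le (hP.1 (w i.castSucc) (w i.succ)) with h | h
    · exact h
    · exfalso
      have : ∏ i : Fin n, P (w i.castSucc) (w i.succ) = 0 :=
        Finset.prod_eq_zero (Finset.mem_univ i) h.symm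
      rw [this] at h2; exact lt_irrefl 0 h2
  · exact absurd h2 (not_lt.mpr hprod)

lemma pi_letter_pos {n : ℕ} {w : Fin (n + 1) → V} (hw : 0 < wordProb pi P w)
    (k : Fin (n + 1)) : 0 < pi (w k) := by
  obtain ⟨h0, htr⟩ := word_pos_parts hP hpi hw
  rcases k with ⟨k, hk⟩
  induction k with
  | zero => exact h0
  | succ k ih =>
    have hk' : k < n + 1 := by omega
    have hkn : k < n := by omega
    have h1 : 0 < pi (w ⟨k, hk'⟩) := ih hk'
    have h2 : 0 < P (w ⟨k, hk'⟩) (w ⟨k + 1, hk⟩) := by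
      have := htr ⟨k, hkn⟩
      have e1 : (⟨k, hkn⟩ : Fin n).castSucc = ⟨k, hk'⟩ := rfl
      have e2 : (⟨k, hkn⟩ : Fin n).succ = ⟨k + 1, hk⟩ := rfl
      rwa [e1, e2] at this
    calc (0:ℝ) < pi (w ⟨k, hk'⟩) * P (w ⟨k, hk'⟩) (w ⟨k + 1, hk⟩) := mul_pos h1 h2
      _ ≤ pi (w ⟨k + 1, hk⟩) := pi_mul_le hP hpi _ _

omit hP hpi in
lemma wordProb_snoc {m : ℕ} (g : Fin (m + 1) → V) (a : V) :
    wordProb pi P (Fin.snoc g a) = wordProb pi P g * P (g (Fin.last m)) a := by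
  unfold wordProb
  rw [Fin.prod_univ_castSucc]
  have h0 : (Fin.snoc g a : Fin (m + 2) → V) 0 = g 0 := by
    have e : (0 : Fin (m + 2)) = (0 : Fin (m + 1)).castSucc := rfl
    rw [e, Fin.snoc_castSucc]
  have hfactor : ∀ i : Fin m,
      P ((Fin.snoc g a : Fin (m+2) → V) i.castSucc.castSucc)
        ((Fin.snoc g a : Fin (m+2) → V) i.castSucc.succ)
      = P (g i.castSucc) (g i.succ) := fun i => by
    rw [Fin.snoc_castSucc, Fin.succ_castSucc, Fin.snoc_castSucc]
  have hlast : P ((Fin.snoc g a : Fin (m+2) → V) (Fin.last m).castSucc)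
      ((Fin.snoc g a : Fin (m+2) → V) (Fin.last m).succ) = P (g (Fin.last m)) a := by
    rw [Fin.snoc_castSucc, Fin.succ_last, Fin.snoc_last]
  rw [Finset.prod_congr rfl fun i _ => hfactor i, hlast, h0]
  ring

/-- Tail of a positive word is positive. -/
lemma wordProb_tail_pos {m : ℕ} {y : Fin (m + 2) → V} (hy : 0 < wordProb pi P y) :
    0 < wordProb pi P (fun i : Fin (m + 1) => y i.succ) := by
  obtain ⟨h0, htr⟩ := word_pos_parts hP hpi hy
  unfold wordProb
  apply mul_pos
  · exact pi_letter_pos hP hpi hy _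
  · refine Finset.prod_pos fun i _ => ?_
    have := htr i.succ
    have e : (i.castSucc).succ = (i.succ).castSucc := Fin.succ_castSucc i
    rw [← e] at this
    exact this

/-- The core combinatorial identity: summing a block-matrix row over the last letter. -/
lemma block_row {n : ℕ} (y : BlockStates pi P n) (a : V) :
    ∑ x : BlockStates pi P n, (if x.1 (Fin.last n) = a then blockMatrix pi P n y x else 0)
      = P (y.1 (Fin.last n)) a := by
  classical
  set s : Fin (n + 1) → V := Fin.snoc (fun i : Fin n => y.1 i.succ) a with hs_def
  have hs_last : s (Fin.last n) = a := Fin.snoc_last _ _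
  have hs_cast : ∀ i : Fin n, s i.castSucc = y.1 i.succ := fun i => Fin.snoc_castSucc _ _ _
  have huniq : ∀ x : BlockStates pi P n, x.1 (Fin.last n) = a →
      (∀ i : Fin n, y.1 i.succ = x.1 i.castSucc) → x.1 = s := by
    intro x hxa hxc
    funext j
    refine Fin.lastCases ?_ (fun i => ?_) j
    · rw [hxa, hs_last]
    · rw [← hxc i, hs_cast]
  by_cases hpa : 0 < P (y.1 (Fin.last n)) a
  · -- the successor word is a valid block state
    have hspos : 0 < wordProb pi P s := by
      cases n with
      | zero =>
        have : wordProb pi P s = pi (s 0) := by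
          unfold wordProb; simp
        rw [this]
        have h0 : s 0 = a := hs_last
        rw [h0]
        have hy0 : 0 < pi (y.1 (Fin.last 0)) := pi_letter_pos hP hpi y.2 _
        calc (0:ℝ) < pi (y.1 (Fin.last 0)) * P (y.1 (Fin.last 0)) a := mul_pos hy0 hpa
          _ ≤ pi a := pi_mul_le hP hpi _ _
      | succ m =>
        rw [hs_def, wordProb_snoc, Fin.succ_last]
        exact mul_pos (wordProb_tail_pos hP hpi y.2) hpa
    rw [Finset.sum_eq_single (⟨s, hspos⟩ : BlockStates pi P n)]
    · rw [if_pos (show s (Fin.last n) = a from hs_last)]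
      unfold blockMatrix
      rw [if_pos (show ∀ i : Fin n, y.1 i.succ = s i.castSucc from fun i => (hs_cast i).symm)]
      dsimp only
      rw [hs_last]
    · intro x _ hxne
      by_cases hxa : x.1 (Fin.last n) = a
      · rw [if_pos hxa]
        unfold blockMatrix
        rw [if_neg]
        intro hcond
        exact hxne (Subtype.ext (huniq x hxa hcond))
      · rw [if_neg hxa]
    · intro h; exact absurd (Finset.mem_univ _) h
  · -- P (y last) a = 0 : every term vanishes
    have hpa0 : P (y.1 (Fin.last n)) a = 0 :=
      le_antisymm (not_lt.mp hpa) (hP.1 _ _)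
    rw [hpa0]
    refine Finset.sum_eq_zero fun x _ => ?_
    by_cases hxa : x.1 (Fin.last n) = a
    · rw [if_pos hxa]
      unfold blockMatrix
      split
      · rw [hxa, hpa0]
      · rfl
    · rw [if_neg hxa]

lemma block_nonneg {n : ℕ} (y x : BlockStates pi P n) : 0 ≤ blockMatrix pi P n y x := by
  unfold blockMatrix
  split
  · exact hP.1 _ _
  · exact le_refl 0

lemma block_stochastic {n : ℕ} : IsStochastic (blockMatrix pi P n) := by
  constructor
  · exact block_nonneg hP hpi
  · intro y
    have key : ∀ x : BlockStates pi P n,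
        blockMatrix pi P n y x
          = ∑ a, (if x.1 (Fin.last n) = a then blockMatrix pi P n y x else 0) := by
      intro x
      rw [Finset.sum_ite_eq univ (x.1 (Fin.last n)) (fun _ => blockMatrix pi P n y x)]
      simp
    rw [Finset.sum_congr rfl fun x _ => key x, Finset.sum_comm]
    rw [Finset.sum_congr rfl fun a _ => block_row hP hpi y a]
    exact hP.2 _

lemma block_marginal {n : ℕ} (u : BlockStates pi P n) (t : ℕ) (a : V) :
    ∑ x : BlockStates pi P n, (if x.1 (Fin.last n) = a then (blockMatrix pi P n ^ t) u x else 0)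
      = (P ^ t) (u.1 (Fin.last n)) a := by
  induction t generalizing a with
  | zero =>
    simp only [pow_zero, Matrix.one_apply]
    have key : ∀ x : BlockStates pi P n,
        (if x.1 (Fin.last n) = a then (if u = x then (1:ℝ) else 0) else 0)
          = (if u = x then (if x.1 (Fin.last n) = a then (1:ℝ) else 0) else 0) := by
      intro x
      by_cases h1 : x.1 (Fin.last n) = a <;> by_cases h2 : u = x <;> simp [h1, h2]
    rw [Finset.sum_congr rfl fun x _ => key x]
    rw [Finset.sum_ite_eq univ u (fun x => if x.1 (Fin.last n) = a then (1:ℝ) else 0)]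
    simp
  | succ t ih =>
    have expand : ∀ x : BlockStates pi P n,
        (if x.1 (Fin.last n) = a then (blockMatrix pi P n ^ (t+1)) u x else 0)
          = ∑ y : BlockStates pi P n, (blockMatrix pi P n ^ t) u y
              * (if x.1 (Fin.last n) = a then blockMatrix pi P n y x else 0) := by
      intro x
      split
      · rw [pow_succ, Matrix.mul_apply]
      · simp
    rw [Finset.sum_congr rfl fun x _ => expand x, Finset.sum_comm]
    have inner : ∀ y : BlockStates pi P n,
        ∑ x : BlockStates pi P n, (blockMatrix pi P n ^ t) u y
            * (if x.1 (Fin.last n) = a then blockMatrix pi P n y x else 0)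
          = (blockMatrix pi P n ^ t) u y * P (y.1 (Fin.last n)) a := by
      intro y
      rw [← Finset.mul_sum, block_row hP hpi y a]
    rw [Finset.sum_congr rfl fun y _ => inner y]
    have regroup : ∀ y : BlockStates pi P n,
        (blockMatrix pi P n ^ t) u y * P (y.1 (Fin.last n)) a
          = ∑ b, (if y.1 (Fin.last n) = b then (blockMatrix pi P n ^ t) u y else 0) * P b a := by
      intro y
      rw [Finset.sum_congr rfl fun b (_ : b ∈ univ) => by
        rw [ite_mul, zero_mul] ]
      rw [Finset.sum_ite_eq univ (y.1 (Fin.last n))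
        (fun b => (blockMatrix pi P n ^ t) u y * P b a)]
      simp
    rw [Finset.sum_congr rfl fun y _ => regroup y, Finset.sum_comm]
    have collect : ∀ b : V,
        ∑ y : BlockStates pi P n,
            (if y.1 (Fin.last n) = b then (blockMatrix pi P n ^ t) u y else 0) * P b a
          = (P ^ t) (u.1 (Fin.last n)) b * P b a := by
      intro b
      rw [← Finset.sum_mul, ih b]
    rw [Finset.sum_congr rfl fun b _ => collect b]
    rw [pow_succ, Matrix.mul_apply]

/-- `n`-step lower bound: from `w` the block chain reaches any `v` whose first letter is the
last letter of `w`, with probability at least the product of transition probabilities of `v`. -/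
lemma block_n_step_lower {n : ℕ} (w v : BlockStates pi P n)
    (hwv : w.1 (Fin.last n) = v.1 0) :
    ∏ i : Fin n, P (v.1 i.castSucc) (v.1 i.succ) ≤ (blockMatrix pi P n ^ n) w v := by
  classical
  -- the concatenated path
  set c : ℕ → V := fun j => if h : j ≤ n then w.1 ⟨j, Nat.lt_succ_of_le h⟩
    else v.1 ⟨min (j - n) n, Nat.lt_succ_of_le (min_le_right _ _)⟩ with hc
  have hcw : ∀ j (h : j ≤ n), c j = w.1 ⟨j, Nat.lt_succ_of_le h⟩ := by
    intro j h; simp only [hc, dif_pos h]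
  have hcv : ∀ j (h1 : n ≤ j) (h2 : j ≤ 2 * n), c j = v.1 ⟨j - n, by omega⟩ := by
    intro j h1 h2
    by_cases hj : j ≤ n
    · have hj' : j = n := le_antisymm hj h1
      subst hj'
      rw [hcw j le_rfl]
      have e : (⟨j, Nat.lt_succ_of_le le_rfl⟩ : Fin (j+1)) = Fin.last j := rfl
      rw [e, hwv]
      exact congrArg v.1 (Fin.ext (by simp))
    · simp only [hc, dif_neg hj]
      exact congrArg v.1 (Fin.ext (by
        show min (j - n) n = j - n
        omega))
  have htrans : ∀ j, j < 2 * n → 0 < P (c j) (c (j + 1)) := by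
    intro j hj
    rcases Nat.lt_or_ge j n with hjn | hjn
    · -- inside w
      have h1 : j ≤ n := le_of_lt hjn
      have h2 : j + 1 ≤ n := hjn
      rw [hcw j h1, hcw (j+1) h2]
      have := (word_pos_parts hP hpi w.2).2 ⟨j, hjn⟩
      have e1 : (⟨j, hjn⟩ : Fin n).castSucc = ⟨j, Nat.lt_succ_of_le h1⟩ := rfl
      have e2 : (⟨j, hjn⟩ : Fin n).succ = ⟨j + 1, Nat.lt_succ_of_le h2⟩ := rfl
      rwa [e1, e2] at this
    · -- inside v
      have hj2 : j ≤ 2 * n := by omega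
      have hj3 : j + 1 ≤ 2 * n := by omega
      rw [hcv j hjn hj2, hcv (j+1) (by omega) hj3]
      have hjn' : j - n < n := by omega
      have := (word_pos_parts hP hpi v.2).2 ⟨j - n, hjn'⟩
      have e1 : (⟨j - n, hjn'⟩ : Fin n).castSucc = ⟨j - n, by omega⟩ := rfl
      have e2 : (⟨j - n, hjn'⟩ : Fin n).succ = ⟨j + 1 - n, by omega⟩ :=
        Fin.ext (by show j - n + 1 = j + 1 - n; omega)
      rwa [e1, e2] at this
  -- the intermediate words are valid block states
  have Zpos : ∀ k, k ≤ n → 0 < wordProb pi P (fun i : Fin (n+1) => c (i.val + k)) := by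
    intro k hk
    unfold wordProb
    apply mul_pos
    · show 0 < pi (c ((0 : Fin (n+1)).val + k))
      have e : (0 : Fin (n+1)).val + k = k := by simp
      rw [e, hcw k hk]
      exact pi_letter_pos hP hpi w.2 _
    · refine Finset.prod_pos fun i _ => ?_
      show 0 < P (c (i.castSucc.val + k)) (c (i.succ.val + k))
      have e1 : (i.castSucc.val + k) = i.val + k := rfl
      have e2 : (i.succ.val + k) = (i.val + k) + 1 := by
        show i.val + 1 + k = i.val + k + 1
        omega
      rw [e1, e2]
      exact htrans (i.val + k) (by omega)
  -- main induction
  have main : ∀ k (hk : k ≤ n),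
      ∏ i ∈ Finset.range k, P (c (n + i)) (c (n + i + 1))
        ≤ (blockMatrix pi P n ^ k) w ⟨fun i : Fin (n+1) => c (i.val + k), Zpos k hk⟩ := by
    intro k
    induction k with
    | zero =>
      intro hk
      have hZ0 : (⟨fun i : Fin (n+1) => c (i.val + 0), Zpos 0 hk⟩ : BlockStates pi P n) = w := by
        refine Subtype.ext (funext fun i => ?_)
        show c (i.val + 0) = w.1 i
        rw [Nat.add_zero, hcw i.val (Nat.lt_succ_iff.mp i.isLt)]
      rw [hZ0, pow_zero, Matrix.one_apply_eq, Finset.prod_range_zero]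
    | succ k ih =>
      intro hk
      have hk' : k ≤ n := by omega
      have step : blockMatrix pi P n ⟨fun i : Fin (n+1) => c (i.val + k), Zpos k hk'⟩
          ⟨fun i : Fin (n+1) => c (i.val + (k+1)), Zpos (k+1) hk⟩
          = P (c (n + k)) (c (n + k + 1)) := by
        unfold blockMatrix
        rw [if_pos]
        · show P (c ((Fin.last n).val + k)) (c ((Fin.last n).val + (k+1)))
            = P (c (n + k)) (c (n + k + 1))
          have eA : (Fin.last n).val + k = n + k := by rw [Fin.val_last]
          have eB : (Fin.last n).val + (k+1) = n + k + 1 := by rw [Fin.val_last]; omega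
          rw [eA, eB]
        · intro i
          show c (i.succ.val + k) = c (i.castSucc.val + (k + 1))
          exact congrArg c (by show i.val + 1 + k = i.val + (k + 1); omega)
      have nonneg1 : (0:ℝ) ≤ (blockMatrix pi P n ^ k) w
          ⟨fun i : Fin (n+1) => c (i.val + k), Zpos k hk'⟩ :=
        (isStochastic_pow (block_stochastic hP hpi) k).1 _ _
      calc ∏ i ∈ Finset.range (k+1), P (c (n + i)) (c (n + i + 1))
          = (∏ i ∈ Finset.range k, P (c (n + i)) (c (n + i + 1))) * P (c (n+k)) (c (n+k+1)) :=
            Finset.prod_range_succ _ k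
        _ ≤ (blockMatrix pi P n ^ k) w ⟨fun i : Fin (n+1) => c (i.val + k), Zpos k hk'⟩
              * P (c (n+k)) (c (n+k+1)) := by
            refine mul_le_mul_of_nonneg_right (ih hk') (le_of_lt (htrans (n+k) (by omega)))
        _ = (blockMatrix pi P n ^ k) w ⟨fun i : Fin (n+1) => c (i.val + k), Zpos k hk'⟩
              * blockMatrix pi P n ⟨fun i : Fin (n+1) => c (i.val + k), Zpos k hk'⟩
                ⟨fun i : Fin (n+1) => c (i.val + (k+1)), Zpos (k+1) hk⟩ := by rw [step]
        _ ≤ ∑ x : BlockStates pi P n, (blockMatrix pi P n ^ k) w x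
              * blockMatrix pi P n x ⟨fun i : Fin (n+1) => c (i.val + (k+1)), Zpos (k+1) hk⟩ := by
            refine Finset.single_le_sum (f := fun x => (blockMatrix pi P n ^ k) w x
              * blockMatrix pi P n x ⟨fun i : Fin (n+1) => c (i.val + (k+1)), Zpos (k+1) hk⟩)
              (fun x _ => mul_nonneg ((isStochastic_pow (block_stochastic hP hpi) k).1 _ _)
                (block_nonneg hP hpi _ _)) (Finset.mem_univ _)
        _ = (blockMatrix pi P n ^ (k+1)) w
              ⟨fun i : Fin (n+1) => c (i.val + (k+1)), Zpos (k+1) hk⟩ := by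
            rw [pow_succ, Matrix.mul_apply]
  have hZn : (⟨fun i : Fin (n+1) => c (i.val + n), Zpos n le_rfl⟩ : BlockStates pi P n) = v := by
    refine Subtype.ext (funext fun i => ?_)
    show c (i.val + n) = v.1 i
    rw [hcv (i.val + n) (by omega) (by omega)]
    exact congrArg v.1 (Fin.ext (by show i.val + n - n = i.val; omega))
  have hprod : ∏ i ∈ Finset.range n, P (c (n + i)) (c (n + i + 1))
      = ∏ i : Fin n, P (v.1 i.castSucc) (v.1 i.succ) := by
    rw [← Fin.prod_univ_eq_prod_range (fun j => P (c (n + j)) (c (n + j + 1))) n]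
    refine Finset.prod_congr rfl fun i _ => ?_
    have e1 : c (n + i.val) = v.1 i.castSucc := by
      rw [hcv (n + i.val) (by omega) (by omega)]
      exact congrArg v.1 (Fin.ext (by show n + i.val - n = i.val; omega))
    have e2 : c (n + i.val + 1) = v.1 i.succ := by
      rw [hcv (n + i.val + 1) (by omega) (by omega)]
      exact congrArg v.1 (Fin.ext (by show n + i.val + 1 - n = i.val + 1; omega))
    rw [e1, e2]
  have := main n le_rfl
  rw [hZn, hprod] at this
  exact this

/-- `(m+n)`-step lower bound. -/
lemma block_step_lower {n : ℕ} (m : ℕ) (u v : BlockStates pi P n) :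
    (P ^ m) (u.1 (Fin.last n)) (v.1 0) * ∏ i : Fin n, P (v.1 i.castSucc) (v.1 i.succ)
      ≤ (blockMatrix pi P n ^ (m + n)) u v := by
  rw [pow_add, Matrix.mul_apply]
  have key : ∀ x : BlockStates pi P n,
      (if x.1 (Fin.last n) = v.1 0 then (blockMatrix pi P n ^ m) u x else 0)
          * ∏ i : Fin n, P (v.1 i.castSucc) (v.1 i.succ)
        ≤ (blockMatrix pi P n ^ m) u x * (blockMatrix pi P n ^ n) x v := by
    intro x
    by_cases hx : x.1 (Fin.last n) = v.1 0
    · rw [if_pos hx]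
      exact mul_le_mul_of_nonneg_left (block_n_step_lower hP hpi x v hx)
        ((isStochastic_pow (block_stochastic hP hpi) m).1 _ _)
    · rw [if_neg hx, zero_mul]
      exact mul_nonneg ((isStochastic_pow (block_stochastic hP hpi) m).1 _ _)
        ((isStochastic_pow (block_stochastic hP hpi) n).1 _ _)
  calc (P ^ m) (u.1 (Fin.last n)) (v.1 0) * ∏ i : Fin n, P (v.1 i.castSucc) (v.1 i.succ)
      = ∑ x : BlockStates pi P n,
          (if x.1 (Fin.last n) = v.1 0 then (blockMatrix pi P n ^ m) u x else 0)
            * ∏ i : Fin n, P (v.1 i.castSucc) (v.1 i.succ) := by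
        rw [← Finset.sum_mul, block_marginal hP hpi u m (v.1 0)]
    _ ≤ ∑ x : BlockStates pi P n,
          (blockMatrix pi P n ^ m) u x * (blockMatrix pi P n ^ n) x v :=
        Finset.sum_le_sum fun x _ => key x

/-- Total mass of words weighted by an initial distribution. -/
lemma word_mass (n : ℕ) (ν : V → ℝ) :
    ∑ w : Fin (n + 1) → V, ν (w 0) * ∏ i : Fin n, P (w i.castSucc) (w i.succ) = ∑ a, ν a := by
  induction n generalizing ν with
  | zero =>
    rw [← (Equiv.funUnique (Fin 1) V).symm.sum_comp
      (fun w : Fin 1 → V => ν (w 0) * ∏ i : Fin 0, P (w i.castSucc) (w i.succ))]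
    simp
  | succ n ih =>
    rw [← (Fin.consEquiv (fun _ : Fin (n+2) => V)).sum_comp
      (fun w : Fin (n+2) → V => ν (w 0) * ∏ i : Fin (n+1), P (w i.castSucc) (w i.succ))]
    rw [Fintype.sum_prod_type]
    have inner : ∀ a : V, ∑ g : Fin (n+1) → V,
        (fun w : Fin (n+2) → V => ν (w 0) * ∏ i : Fin (n+1), P (w i.castSucc) (w i.succ))
          ((Fin.consEquiv (fun _ : Fin (n+2) => V)) (a, g))
        = ∑ g : Fin (n+1) → V, (ν a * P a (g 0)) * ∏ i : Fin n, P (g i.castSucc) (g i.succ) := by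
      intro a
      refine Finset.sum_congr rfl fun g _ => ?_
      have hcons : (Fin.consEquiv (fun _ : Fin (n+2) => V)) (a, g) = Fin.cons a g := rfl
      rw [hcons]
      dsimp only
      rw [Fin.prod_univ_succ]
      have h00 : (Fin.cons a g : Fin (n+2) → V) 0 = a := rfl
      have h01 : (Fin.cons a g : Fin (n+2) → V) ((0 : Fin (n+1)).succ) = g 0 := Fin.cons_succ _ _ _
      have h0c : (Fin.cons a g : Fin (n+2) → V) ((0 : Fin (n+1)).castSucc) = a := rfl
      have hfac : ∀ i : Fin n,
          P ((Fin.cons a g : Fin (n+2) → V) i.succ.castSucc)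
            ((Fin.cons a g : Fin (n+2) → V) i.succ.succ)
          = P (g i.castSucc) (g i.succ) := by
        intro i
        rw [← Fin.succ_castSucc, Fin.cons_succ, Fin.cons_succ]
      rw [Finset.prod_congr rfl fun i _ => hfac i, h0c, h01, h00]
      ring
    rw [Finset.sum_congr rfl fun a _ => inner a]
    have inner2 : ∀ a : V,
        ∑ g : Fin (n+1) → V, (ν a * P a (g 0)) * ∏ i : Fin n, P (g i.castSucc) (g i.succ)
          = ν a := by
      intro a
      rw [ih (fun b => ν a * P a b), ← Finset.mul_sum, hP.2 a, mul_one]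
    rw [Finset.sum_congr rfl fun a _ => inner2 a]

lemma wordProb_total (n : ℕ) : ∑ w : Fin (n + 1) → V, wordProb pi P w = 1 := by
  have := word_mass hP hpi n pi
  rw [hpi.2.1] at this
  exact this

lemma wordProb_le_one {n : ℕ} (w : Fin (n + 1) → V) : wordProb pi P w ≤ 1 := by
  rw [← wordProb_total hP hpi n]
  exact Finset.single_le_sum (fun x (_ : x ∈ univ) => wordProb_nonneg hP hpi x)
    (Finset.mem_univ w)

lemma blockDelta_le_one (n : ℕ) : blockDelta pi P n ≤ 1 := by
  unfold blockDelta
  rw [← wordProb_total hP hpi n]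
  refine Finset.sum_le_sum fun w _ => ?_
  have h1 := wordProb_nonneg hP hpi (pi := pi) w
  have h2 := wordProb_le_one hP hpi w
  nlinarith

lemma blockDelta_eq_subtype (n : ℕ) :
    ∑ x : BlockStates pi P n, (wordProb pi P x.1) ^ 2 = blockDelta pi P n := by
  classical
  unfold blockDelta
  rw [← Finset.sum_subtype (univ.filter fun w : Fin (n+1) → V => 0 < wordProb pi P w)
    (fun w => by simp) (fun w => (wordProb pi P w) ^ 2)]
  rw [Finset.sum_filter]
  refine (Finset.sum_congr rfl fun w _ => ?_).symm
  by_cases hw : 0 < wordProb pi P w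
  · rw [if_pos hw]
  · rw [if_neg hw]
    have : wordProb pi P w = 0 := le_antisymm (not_lt.mp hw) (wordProb_nonneg hP hpi w)
    rw [this]; ring

lemma exists_block_state (n : ℕ) : ∃ w : Fin (n + 1) → V, 0 < wordProb pi P w := by
  induction n with
  | zero =>
    have : ∃ a, 0 < pi a := by
      by_contra h
      push_neg at h
      have : ∑ a, pi a ≤ 0 := Finset.sum_nonpos fun a _ => h a
      rw [hpi.2.1] at this; linarith
    obtain ⟨a, ha⟩ := this
    refine ⟨fun _ => a, ?_⟩
    unfold wordProb
    simpa using ha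
  | succ n ih =>
    obtain ⟨w, hw⟩ := ih
    have : ∃ a, 0 < P (w (Fin.last n)) a := by
      by_contra h
      push_neg at h
      have : ∑ a, P (w (Fin.last n)) a ≤ 0 := Finset.sum_nonpos fun a _ => h a
      rw [hP.2] at this; linarith
    obtain ⟨a, ha⟩ := this
    refine ⟨Fin.snoc w a, ?_⟩
    rw [wordProb_snoc]
    exact mul_pos hw ha

lemma blockDelta_pos (n : ℕ) : 0 < blockDelta pi P n := by
  obtain ⟨w, hw⟩ := exists_block_state hP hpi n
  unfold blockDelta
  have : (0:ℝ) < (wordProb pi P w) ^ 2 := by positivity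
  refine lt_of_lt_of_le this ?_
  exact Finset.single_le_sum (f := fun x => (wordProb pi P x) ^ 2)
    (fun x _ => sq_nonneg _) (Finset.mem_univ w)

end BlockChain

/-- there is `K > 0` such that for all large `n`, the maximal expected meeting
time on the `n`-block chain satisfies `m_n* ≤ K·(n+1)/Δ_n`. -/
theorem max_meeting_upper_bound [Fintype V] [DecidableEq V] (P : Matrix V V ℝ)
    (hP : IsStochastic P) (hmix : IsMixing P) (pi : V → ℝ) (hpi : IsStationaryDist P pi) :
    ∃ K > (0 : ℝ), ∃ N : ℕ, ∀ n ≥ N,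
      maxMeetExp (blockMatrix pi P n) ≤ K * ((n : ℝ) + 1) / blockDelta pi P n := by
  classical
  obtain ⟨m, hm0, hmpos⟩ := hmix
  -- V is nonempty
  have hVne : Nonempty V := by
    rcases isEmpty_or_nonempty V with h | h
    · exfalso
      have := hpi.2.1
      rw [Finset.univ_eq_empty, Finset.sum_empty] at this
      norm_num at this
    · exact h
  -- minimal entry of P^m
  obtain ⟨p₀, _, hp₀⟩ := Finset.exists_min_image (univ : Finset (V × V))
    (fun p => (P ^ m) p.1 p.2) ⟨(Classical.arbitrary V, Classical.arbitrary V), Finset.mem_univ _⟩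
  set ε : ℝ := (P ^ m) p₀.1 p₀.2 with hε_def
  have hε_pos : 0 < ε := hmpos p₀.1 p₀.2
  have hε_le : ∀ a b : V, ε ≤ (P ^ m) a b := fun a b => hp₀ (a, b) (Finset.mem_univ _)
  have hε_le_one : ε ≤ 1 := by
    have h1 : ε ≤ (P ^ m) p₀.1 p₀.1 := hε_le _ _
    have h2 : (P ^ m) p₀.1 p₀.1 ≤ ∑ b, (P ^ m) p₀.1 b :=
      Finset.single_le_sum (f := fun b => (P ^ m) p₀.1 b)
        (fun b _ => (isStochastic_pow hP m).1 _ _) (Finset.mem_univ p₀.1)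
    rw [(isStochastic_pow hP m).2 p₀.1] at h2
    linarith
  have hpi_le_one : ∀ a : V, pi a ≤ 1 := by
    intro a
    rw [← hpi.2.1]
    exact Finset.single_le_sum (fun b _ => hpi.1 b) (Finset.mem_univ a)
  refine ⟨(m + 1) / ε ^ 2, by positivity, 0, fun n _ => ?_⟩
  -- set up the product chain
  set Pn := blockMatrix pi P n with hPn_def
  have hPn : IsStochastic Pn := block_stochastic hP hpi
  set Q := prodMatrix Pn with hQ_def
  have hQ : IsStochastic Q := isStochastic_prod hPn
  set B := diagSet (BlockStates pi P n) with hB_def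
  set Δ := blockDelta pi P n with hΔ_def
  have hΔ_pos : 0 < Δ := blockDelta_pos hP hpi n
  have hΔ_le : Δ ≤ 1 := blockDelta_le_one hP hpi n
  set L := m + n with hL_def
  have hL_pos : 0 < L := by omega
  -- Step 1 : from any pair, the two walkers meet at time L with probability ≥ ε² Δ
  have hlow : ∀ u x : BlockStates pi P n, ε * wordProb pi P x.1 ≤ (Pn ^ L) u x := by
    intro u x
    refine le_trans ?_ (block_step_lower hP hpi m u x)
    unfold wordProb
    have hprod : 0 ≤ ∏ i : Fin n, P (x.1 i.castSucc) (x.1 i.succ) :=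
      Finset.prod_nonneg fun i _ => hP.1 _ _
    have h1 : ε * pi (x.1 0) ≤ (P ^ m) (u.1 (Fin.last n)) (x.1 0) := by
      calc ε * pi (x.1 0) ≤ ε * 1 :=
            mul_le_mul_of_nonneg_left (hpi_le_one _) (le_of_lt hε_pos)
        _ = ε := mul_one ε
        _ ≤ (P ^ m) (u.1 (Fin.last n)) (x.1 0) := hε_le _ _
    calc ε * (pi (x.1 0) * ∏ i : Fin n, P (x.1 i.castSucc) (x.1 i.succ))
        = (ε * pi (x.1 0)) * ∏ i : Fin n, P (x.1 i.castSucc) (x.1 i.succ) := by ring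
      _ ≤ (P ^ m) (u.1 (Fin.last n)) (x.1 0) * ∏ i : Fin n, P (x.1 i.castSucc) (x.1 i.succ) :=
          mul_le_mul_of_nonneg_right h1 hprod
  have hmeet : ∀ p : BlockStates pi P n × BlockStates pi P n,
      ε ^ 2 * Δ ≤ ∑ b ∈ B, (Q ^ L) p b := by
    intro p
    have hdiag : ∑ b ∈ B, (Q ^ L) p b
        = ∑ x : BlockStates pi P n, (Pn ^ L) p.1 x * (Pn ^ L) p.2 x := by
      rw [hB_def]
      unfold diagSet
      rw [Finset.sum_filter, Fintype.sum_prod_type]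
      refine Finset.sum_congr rfl fun x _ => ?_
      rw [Finset.sum_ite_eq univ x (fun y => (Q ^ L) p (x, y))]
      simp only [Finset.mem_univ, if_true]
      rw [hQ_def, prodMatrix_pow]
    rw [hdiag]
    have keyx : ∀ x : BlockStates pi P n,
        ε ^ 2 * (wordProb pi P x.1) ^ 2 ≤ (Pn ^ L) p.1 x * (Pn ^ L) p.2 x := by
      intro x
      have hw0 : 0 ≤ wordProb pi P x.1 := wordProb_nonneg hP hpi x.1
      have e : ε ^ 2 * (wordProb pi P x.1) ^ 2
          = (ε * wordProb pi P x.1) * (ε * wordProb pi P x.1) := by ring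
      rw [e]
      exact mul_le_mul (hlow p.1 x) (hlow p.2 x)
        (mul_nonneg (le_of_lt hε_pos) hw0) ((isStochastic_pow hPn L).1 _ _)
    calc ε ^ 2 * Δ = ∑ x : BlockStates pi P n, ε ^ 2 * (wordProb pi P x.1) ^ 2 := by
          rw [← Finset.mul_sum, hΔ_def, blockDelta_eq_subtype hP hpi]
      _ ≤ ∑ x : BlockStates pi P n, (Pn ^ L) p.1 x * (Pn ^ L) p.2 x :=
          Finset.sum_le_sum fun x _ => keyx x
  -- Step 2 : avoidance at time L
  set M : ℝ := 1 - ε ^ 2 * Δ with hM_def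
  have hM_lt_one : M < 1 := by
    have : 0 < ε ^ 2 * Δ := by positivity
    rw [hM_def]; linarith
  have hM_nonneg : 0 ≤ M := by
    have h1 : ε ^ 2 ≤ 1 := by nlinarith
    have : ε ^ 2 * Δ ≤ 1 := by nlinarith
    rw [hM_def]; linarith
  have havoidL : ∀ p : BlockStates pi P n × BlockStates pi P n,
      avoidProb Q B (pointMass p) L ≤ M := by
    intro p
    refine le_trans (avoid_le_one_sub Q B hQ p L) ?_
    rw [hM_def]
    have := hmeet p
    linarith
  -- Step 3 : iterate
  have havoid_k : ∀ p : BlockStates pi P n × BlockStates pi P n, ∀ k : ℕ,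
      avoidProb Q B (pointMass p) (k * L) ≤ M ^ k :=
    fun p k => avoid_iterate Q B hQ hM_nonneg (fun q _ => havoidL q) p k
  -- Step 4 : survival bound for any time
  have hsurv : ∀ u v : BlockStates pi P n, ∀ t : ℕ,
      meetSurvival Pn u v t ≤ M ^ (t / L) := by
    intro u v t
    have h1 : (t / L) * L ≤ t := Nat.div_mul_le_self t L
    calc meetSurvival Pn u v t
        ≤ avoidProb Q B (pointMass (u, v)) ((t / L) * L) :=
          avoid_antitone Q B hQ (pointMass_nonneg _) h1
      _ ≤ M ^ (t / L) := havoid_k (u, v) (t / L)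
  -- Step 5 : geometric sum bound
  have hgeom_tail : ∀ T : ℕ, ∑ k ∈ Finset.range T, M ^ k ≤ (1 - M)⁻¹ := by
    intro T
    have hsum := tsum_geometric_of_lt_one hM_nonneg hM_lt_one
    rw [← hsum]
    exact Summable.sum_le_tsum (Finset.range T) (fun k _ => pow_nonneg hM_nonneg k)
      (summable_geometric_of_lt_one hM_nonneg hM_lt_one)
  have hblock_sum : ∀ T : ℕ, ∑ t ∈ Finset.range (L * T), M ^ (t / L)
      = (L : ℝ) * ∑ k ∈ Finset.range T, M ^ k := by
    intro T
    induction T with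
    | zero => simp
    | succ T ihT =>
      have hLT : L * (T + 1) = L * T + L := by ring
      rw [hLT, Finset.range_eq_Ico, ← Finset.sum_Ico_consecutive _ (Nat.zero_le (L * T))
        (by omega : L * T ≤ L * T + L)]
      rw [← Finset.range_eq_Ico, ihT]
      have hconst : ∑ t ∈ Finset.Ico (L * T) (L * T + L), M ^ (t / L)
          = (L : ℝ) * M ^ T := by
        have : ∀ t ∈ Finset.Ico (L * T) (L * T + L), M ^ (t / L) = M ^ T := by
          intro t ht
          rw [Finset.mem_Ico] at ht
          have : t / L = T := by
            have h1 : t = (t - L * T) + L * T := by omega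
            rw [h1, Nat.add_mul_div_left _ _ hL_pos]
            have : (t - L * T) / L = 0 := Nat.div_eq_of_lt (by omega)
            omega
          rw [this]
        rw [Finset.sum_congr rfl this, Finset.sum_const, Nat.card_Ico]
        have : L * T + L - L * T = L := by omega
        rw [this, nsmul_eq_mul]
      rw [hconst, Finset.sum_range_succ]
      ring
  -- Step 6 : the expected meeting time bound
  have hmexp : ∀ u v : BlockStates pi P n, meetExp Pn u v ≤ (L : ℝ) * (1 - M)⁻¹ := by
    intro u v
    show (∑' t : ℕ, meetSurvival Pn u v t) ≤ (L : ℝ) * (1 - M)⁻¹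
    refine Real.tsum_le_of_sum_range_le
      (fun t => avoid_nonneg Q B hQ.1 (pointMass_nonneg _) t) (fun T => ?_)
    calc ∑ t ∈ Finset.range T, meetSurvival Pn u v t
        ≤ ∑ t ∈ Finset.range T, M ^ (t / L) := Finset.sum_le_sum fun t _ => hsurv u v t
      _ ≤ ∑ t ∈ Finset.range (L * T), M ^ (t / L) := by
          refine Finset.sum_le_sum_of_subset_of_nonneg ?_ fun t _ _ => pow_nonneg hM_nonneg _
          exact Finset.range_subset_range.mpr (Nat.le_mul_of_pos_left T hL_pos)
      _ = (L : ℝ) * ∑ k ∈ Finset.range T, M ^ k := hblock_sum T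
      _ ≤ (L : ℝ) * (1 - M)⁻¹ := by
          refine mul_le_mul_of_nonneg_left (hgeom_tail T) (by positivity)
  -- Step 7 : conclude
  have hne : Nonempty (BlockStates pi P n) := by
    obtain ⟨w, hw⟩ := exists_block_state hP hpi n
    exact ⟨⟨w, hw⟩⟩
  have hsup : maxMeetExp Pn ≤ (L : ℝ) * (1 - M)⁻¹ := by
    unfold maxMeetExp
    exact ciSup_le fun p => hmexp p.1 p.2
  refine le_trans hsup ?_
  have h1M : 1 - M = ε ^ 2 * Δ := by rw [hM_def]; ring
  rw [h1M]
  have hεΔ : (0:ℝ) < ε ^ 2 * Δ := by positivity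
  have hRHS : ((m:ℝ) + 1) / ε ^ 2 * ((n : ℝ) + 1) / Δ
      = (((m:ℝ) + 1) * ((n:ℝ) + 1)) / (ε ^ 2 * Δ) := by
    field_simp
  rw [hRHS, ← div_eq_mul_inv, div_le_div_iff₀ hεΔ hεΔ]
  have hcast : (L : ℝ) = (m : ℝ) + n := by rw [hL_def]; push_cast; ring
  rw [hcast]
  have hm' : (0:ℝ) ≤ m := Nat.cast_nonneg m
  have hn' : (0:ℝ) ≤ n := Nat.cast_nonneg n
  have hkey : (m:ℝ) + n ≤ ((m:ℝ) + 1) * ((n:ℝ) + 1) := by nlinarith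
  nlinarith [mul_le_mul_of_nonneg_right hkey (le_of_lt hεΔ)]
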